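/- For every strict linear order ≻ on 2^𝒪, the rule f^≻ on the universal domain 𝒰_𝒪 defined by f^≻(P_N) = max_≻ {t(P_i) : i ∈ N} (the best-positioned top set of the profile according to ≻) satisfies ontoness, tops-onliness, false-name-proofness, and participation, but violates object neutrality. -/
import Mathlib


/-! ## Basic framework: preferences, profiles, voting rules, axioms -/

/-- A preference is a strict linear order on the set `A` of alternatives, encoded as a
`LinearOrder` structure on `A`; alternative `x` is strictly preferred to `y` iff `y < x`
(i.e. "greater is better"). -/
abbrev Pref (A : Type*) := LinearOrder A

/-- Strict preference: `x` is strictly preferred to `y` under `p`. -/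
def Pref.pref {A : Type*} (p : Pref A) (x y : A) : Prop := p.lt y x

/-- Weak preference (the weak counterpart `R` of the strict preference `P`):
`x` is weakly preferred to `y` under `p`. -/
def Pref.wpref {A : Type*} (p : Pref A) (x y : A) : Prop := p.le y x

/-- The top (most preferred) alternative of a preference. -/
noncomputable def Pref.top {A : Type*} [Fintype A] [Nonempty A] (p : Pref A) : A :=
  @Finset.max' A p Finset.univ Finset.univ_nonempty

/-- The bottom (least preferred) alternative of a preference. -/
noncomputable def Pref.bot {A : Type*} [Fintype A] [Nonempty A] (p : Pref A) : A :=
  @Finset.min' A p Finset.univ Finset.univ_nonempty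

/-- A profile over the society `N` (a finite set of voters, indexed by naturals):
it assigns a preference to each member of `N`. -/
abbrev Profile (A : Type*) (N : Finset ℕ) := (i : ℕ) → i ∈ N → Pref A

/-- The profile `P` takes values in the domain `D` of preferences. -/
def Profile.inDomain {A : Type*} {N : Finset ℕ} (P : Profile A N) (D : Set (Pref A)) : Prop :=
  ∀ i (hi : i ∈ N), P i hi ∈ D

/-- A (variable-population) voting rule: it assigns an alternative to every society
together with a profile over it. -/
abbrev Rule (A : Type*) := (N : Finset ℕ) → Profile A N → A

/-- Ontoness on the domain `D`: for every society and every alternative, some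
`D`-profile realizes that alternative. -/
def OntoOn {A : Type*} (D : Set (Pref A)) (f : Rule A) : Prop :=
  ∀ N : Finset ℕ, N.Nonempty → ∀ a : A, ∃ P : Profile A N, P.inDomain D ∧ f N P = a

/-- Tops-onliness on the domain `D`: two `D`-profiles with the same tops get the
same outcome. -/
def TopsOnlyOn {A : Type*} [Fintype A] [Nonempty A] (D : Set (Pref A)) (f : Rule A) : Prop :=
  ∀ N : Finset ℕ, N.Nonempty → ∀ P P' : Profile A N, P.inDomain D → P'.inDomain D →
    (∀ i (hi : i ∈ N), (P i hi).top = (P' i hi).top) → f N P = f N P'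

/-- False-name-proofness on the domain `D`: if a voter `i` of the society `N` casts,
under fresh identities `N'`, extra votes identical to her own preference, the outcome
does not improve for her. -/
def FalseNameProofOn {A : Type*} (D : Set (Pref A)) (f : Rule A) : Prop :=
  ∀ N N' : Finset ℕ, N.Nonempty → N'.Nonempty → Disjoint N N' →
    ∀ P : Profile A (N ∪ N'), P.inDomain D →
      ∀ i (hi : i ∈ N),
        (∀ j (hj : j ∈ N'),
            P j (Finset.mem_union_right N hj) = P i (Finset.mem_union_left N' hi)) →
        (P i (Finset.mem_union_left N' hi)).wpref
          (f N (fun j hj => P j (Finset.mem_union_left N' hj)))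
          (f (N ∪ N') P)

/-- Participation on the domain `D`: no voter gains by abstaining. -/
def ParticipationOn {A : Type*} (D : Set (Pref A)) (f : Rule A) : Prop :=
  ∀ N : Finset ℕ, 2 ≤ N.card → ∀ P : Profile A N, P.inDomain D →
    ∀ i (hi : i ∈ N),
      (P i hi).wpref (f N P) (f (N.erase i) (fun j hj => P j (Finset.mem_of_mem_erase hj)))

lemma mem_of_mem_image_perm {σ : Equiv.Perm ℕ} {N : Finset ℕ} {j : ℕ}
    (hj : j ∈ N.image σ) : σ.symm j ∈ N := by
  obtain ⟨i, hi, rfl⟩ := Finset.mem_image.mp hj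
  simpa using hi

/-- The permuted profile `σ(P_N)` over the society `σ(N)`: voter `σ i` gets the
preference `P i`. -/
def permProfile {A : Type*} (σ : Equiv.Perm ℕ) {N : Finset ℕ} (P : Profile A N) :
    Profile A (N.image σ) :=
  fun j hj => P (σ.symm j) (mem_of_mem_image_perm hj)

/-- Anonymity on the domain `D`: permuting the voters' identities does not change
the outcome. -/
def AnonymousOn {A : Type*} (D : Set (Pref A)) (f : Rule A) : Prop :=
  ∀ (σ : Equiv.Perm ℕ) (N : Finset ℕ), N.Nonempty → ∀ P : Profile A N, P.inDomain D →
    f (N.image σ) (permProfile σ P) = f N P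

/-- Relabeling a preference along a permutation `γ` of the alternatives: in the new
preference, `γ x` is strictly preferred to `γ y` iff `x` was strictly preferred to `y`. -/
noncomputable def Pref.relabel {A : Type*} (p : Pref A) (γ : Equiv.Perm A) : Pref A :=
  @LinearOrder.lift' A A p γ.symm γ.symm.injective

/-- Neutrality on the domain `D`: relabeling the alternatives by a permutation `γ`
relabels the outcome accordingly. -/
def NeutralOn {A : Type*} (D : Set (Pref A)) (f : Rule A) : Prop :=
  ∀ (γ : Equiv.Perm A) (N : Finset ℕ), N.Nonempty → ∀ P : Profile A N, P.inDomain D →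
    γ (f N P) = f N (fun i hi => (P i hi).relabel γ)

/-! ## The domain of preferences over subsets of a set `O` of objects -/

/-- Object neutrality: permuting the objects by `μ` (which permutes every subset of
objects pointwise) relabels the outcome accordingly. -/
def ObjectNeutralOn {O : Type*} [Fintype O] [DecidableEq O]
    (D : Set (Pref (Finset O))) (f : Rule (Finset O)) : Prop :=
  ∀ (μ : Equiv.Perm O) (N : Finset ℕ), N.Nonempty →
    ∀ P : Profile (Finset O) N, P.inDomain D →
      (f N P).image μ = f N (fun i hi => (P i hi).relabel μ.finsetCongr)

/-- A preference over subsets of objects is separable if adding an object `x ∉ S` to a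
set `S` improves the set exactly when `{x}` is preferred to `∅`. -/
def Separable {O : Type*} [Fintype O] [DecidableEq O] (p : Pref (Finset O)) : Prop :=
  ∀ (S : Finset O) (x : O), x ∉ S → (p.pref (insert x S) S ↔ p.pref {x} (∅ : Finset O))

/-- The domain of separable preferences over subsets of objects. -/
def SepDom (O : Type*) [Fintype O] [DecidableEq O] : Set (Pref (Finset O)) :=
  {p | Separable p}

/-- `t(P_N)`: the set of distinct top sets of the profile `P`. -/
noncomputable def distinctTops {O : Type*} [Fintype O] [DecidableEq O] {N : Finset ℕ}
    (P : Profile (Finset O) N) : Finset (Finset O) :=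
  N.attach.image fun i => (P i.1 i.2).top

/-- The rule `f^>`: an object is chosen iff it belongs to strictly more than half of the
distinct top sets of the profile. -/
noncomputable def fGt (O : Type*) [Fintype O] [DecidableEq O] : Rule (Finset O) :=
  fun N P =>
    Finset.univ.filter fun x =>
      (distinctTops P).card < 2 * ((distinctTops P).filter fun T => x ∈ T).card

/-- The rule `f^≥`: an object is chosen iff it belongs to at least half of the
distinct top sets of the profile. -/
noncomputable def fGe (O : Type*) [Fintype O] [DecidableEq O] : Rule (Finset O) :=
  fun N P =>
    Finset.univ.filter fun x =>
      (distinctTops P).card ≤ 2 * ((distinctTops P).filter fun T => x ∈ T).card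

/-- `g` is the tops-only extension to the domain `Dbig` (⊇ separable preferences) of the
tops-only rule `f` defined on the separable domain: on every `Dbig`-profile `P`, `g`
agrees with the value of `f` at any separable profile `Q` having the same tops as `P`. -/
def IsTopsOnlyExtensionOn {O : Type*} [Fintype O] [DecidableEq O]
    (Dbig : Set (Pref (Finset O))) (f g : Rule (Finset O)) : Prop :=
  ∀ N : Finset ℕ, N.Nonempty →
    ∀ P : Profile (Finset O) N, P.inDomain Dbig →
      ∀ Q : Profile (Finset O) N, Q.inDomain (SepDom O) →
        (∀ i (hi : i ∈ N), (P i hi).top = (Q i hi).top) → g N P = f N Q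

/-- The rule `f^≻` associated with a strict linear order `r` on `2^𝒪`: it selects the
best-positioned (according to `r`) top set of the profile. -/
noncomputable def fBest {O : Type*} [Fintype O] [DecidableEq O]
    (r : Pref (Finset O)) : Rule (Finset O) :=
  fun N P =>
    if h : N.Nonempty then
      @Finset.max' _ r (distinctTops P)
        ⟨(P h.choose h.choose_spec).top,
          Finset.mem_image_of_mem _ (Finset.mem_attach _ ⟨h.choose, h.choose_spec⟩)⟩
    else (∅ : Finset O)

section Helpers

lemma Pref.le_top' {A : Type*} [Fintype A] [Nonempty A] (p : Pref A) (x : A) :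
    p.le x p.top :=
  @Finset.le_max' A p _ _ (Finset.mem_univ x)

lemma Pref.top_unique' {A : Type*} [Fintype A] [Nonempty A] (p : Pref A) {a : A}
    (h : ∀ x, p.le x a) : p.top = a :=
  p.le_antisymm _ _ (h _) (p.le_top' a)

lemma Pref.top_relabel {A : Type*} [Fintype A] [Nonempty A] (p : Pref A) (γ : Equiv.Perm A) :
    (p.relabel γ).top = γ p.top := by
  apply Pref.top_unique'
  intro x
  show p.le (γ.symm x) (γ.symm (γ p.top))
  simpa using p.le_top' (γ.symm x)

lemma mem_distinctTops {O : Type*} [Fintype O] [DecidableEq O] {N : Finset ℕ}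
    {P : Profile (Finset O) N} {T : Finset O} :
    T ∈ distinctTops P ↔ ∃ i, ∃ hi : i ∈ N, (P i hi).top = T := by
  simp only [distinctTops, Finset.mem_image, Finset.mem_attach, true_and, Subtype.exists]

lemma distinctTops_nonempty {O : Type*} [Fintype O] [DecidableEq O] {N : Finset ℕ}
    (hN : N.Nonempty) (P : Profile (Finset O) N) : (distinctTops P).Nonempty :=
  ⟨(P hN.choose hN.choose_spec).top, mem_distinctTops.2 ⟨_, _, rfl⟩⟩

lemma fBest_eq {O : Type*} [Fintype O] [DecidableEq O] (r : Pref (Finset O))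
    {N : Finset ℕ} (hN : N.Nonempty) (P : Profile (Finset O) N) :
    fBest r N P = @Finset.max' _ r (distinctTops P) (distinctTops_nonempty hN P) := by
  rw [fBest, dif_pos hN]

lemma fBest_mem {O : Type*} [Fintype O] [DecidableEq O] (r : Pref (Finset O))
    {N : Finset ℕ} (hN : N.Nonempty) (P : Profile (Finset O) N) :
    fBest r N P ∈ distinctTops P := by
  rw [fBest_eq r hN P]
  exact @Finset.max'_mem _ r _ _

lemma fBest_le {O : Type*} [Fintype O] [DecidableEq O] (r : Pref (Finset O))
    {N : Finset ℕ} (hN : N.Nonempty) (P : Profile (Finset O) N)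
    {T : Finset O} (hT : T ∈ distinctTops P) : r.le T (fBest r N P) := by
  rw [fBest_eq r hN P]
  exact @Finset.le_max' _ r _ _ hT

lemma fBest_congr {O : Type*} [Fintype O] [DecidableEq O] (r : Pref (Finset O))
    {N M : Finset ℕ} (hN : N.Nonempty) (hM : M.Nonempty)
    (P : Profile (Finset O) N) (Q : Profile (Finset O) M)
    (h : distinctTops P = distinctTops Q) : fBest r N P = fBest r M Q := by
  rw [fBest_eq r hN P, fBest_eq r hM Q]
  congr 1

/-- A preference whose top is `a`. -/
noncomputable def prefWithTop {A : Type*} [Fintype A] [Nonempty A] (p : Pref A) (a : A) :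
    Pref A := p.relabel (Equiv.swap p.top a)

lemma prefWithTop_top {A : Type*} [Fintype A] [Nonempty A] (p : Pref A) (a : A) :
    (prefWithTop p a).top = a := by
  rw [prefWithTop, Pref.top_relabel, Equiv.swap_apply_left]

end Helpers

/-- For at least two objects and every strict linear order `r` on
`2^𝒪`, the rule `f^≻` satisfies ontoness, tops-onliness, false-name-proofness and
participation, but violates object neutrality. -/
theorem stmt_17 {O : Type*} [Fintype O] [DecidableEq O] (hO : 2 ≤ Fintype.card O)
    (r : Pref (Finset O)) :
    OntoOn Set.univ (fBest r) ∧ TopsOnlyOn Set.univ (fBest r) ∧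
    FalseNameProofOn Set.univ (fBest r) ∧ ParticipationOn Set.univ (fBest r) ∧
    ¬ ObjectNeutralOn Set.univ (fBest r) := by
  refine ⟨?_, ?_, ?_, ?_, ?_⟩
  · -- Ontoness
    intro N hN a
    refine ⟨fun i hi => prefWithTop r a, fun i hi => trivial, ?_⟩
    have h := fBest_mem r hN (fun i hi => prefWithTop r a)
    rw [mem_distinctTops] at h
    obtain ⟨i, hi, h⟩ := h
    rw [prefWithTop_top] at h
    exact h.symm
  · -- Tops-onliness
    intro N hN P P' _ _ htop
    apply fBest_congr r hN hN
    unfold distinctTops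
    apply Finset.image_congr
    intro i _
    exact htop i.1 i.2
  · -- False-name-proofness
    intro N N' hN hN' hdisj P _ i hi hcopy
    have hNN' : (N ∪ N').Nonempty := hN.mono Finset.subset_union_left
    have heq : distinctTops P
        = distinctTops (fun j hj => P j (Finset.mem_union_left N' hj)) := by
      ext T
      simp only [mem_distinctTops]
      constructor
      · rintro ⟨j, hj, rfl⟩
        rcases Finset.mem_union.mp hj with h | h
        · exact ⟨j, h, rfl⟩
        · rw [hcopy j h]
          exact ⟨i, hi, rfl⟩
      · rintro ⟨j, hj, rfl⟩
        exact ⟨j, Finset.mem_union_left _ hj, rfl⟩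
    have hfe := fBest_congr r hNN' hN P _ heq
    show (P i (Finset.mem_union_left N' hi)).le _ _
    rw [hfe]
    exact (P i (Finset.mem_union_left N' hi)).le_refl _
  · -- Participation
    intro N hcard P _ i hi
    have hN : N.Nonempty := Finset.card_pos.mp (by omega)
    have hNe : (N.erase i).Nonempty := by
      rw [← Finset.card_pos, Finset.card_erase_of_mem hi]; omega
    set Pe : Profile (Finset O) (N.erase i) :=
      fun j hj => P j (Finset.mem_of_mem_erase hj) with hPe
    have hmem := fBest_mem r hN P
    rw [mem_distinctTops] at hmem
    obtain ⟨j, hj, hjtop⟩ := hmem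
    show (P i hi).le (fBest r (N.erase i) Pe) (fBest r N P)
    by_cases hji : j = i
    · subst hji
      rw [← hjtop]
      exact (P j hj).le_top' _
    · have hfe : fBest r N P ∈ distinctTops Pe :=
        mem_distinctTops.2 ⟨j, Finset.mem_erase.2 ⟨hji, hj⟩, hjtop⟩
      have h1 : r.le (fBest r N P) (fBest r (N.erase i) Pe) := fBest_le r hNe Pe hfe
      have hsub : fBest r (N.erase i) Pe ∈ distinctTops P := by
        have h := fBest_mem r hNe Pe
        rw [mem_distinctTops] at h ⊢
        obtain ⟨k, hk, hktop⟩ := h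
        exact ⟨k, Finset.mem_of_mem_erase hk, hktop⟩
      have h2 : r.le (fBest r (N.erase i) Pe) (fBest r N P) := fBest_le r hN P hsub
      rw [r.le_antisymm _ _ h2 h1]
      exact (P i hi).le_refl _
  · -- not object neutral
    intro hne
    obtain ⟨a, b, hab⟩ := Fintype.exists_pair_of_one_lt_card (α := O) (by omega)
    set μ : Equiv.Perm O := Equiv.swap a b with hμ
    set N : Finset ℕ := {0, 1} with hNdef
    have hN : N.Nonempty := ⟨0, by simp [hNdef]⟩
    set P : Profile (Finset O) N :=
      fun i hi => if i = 0 then prefWithTop r {a} else prefWithTop r {b} with hPdef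
    have htops : distinctTops P = {({a} : Finset O), {b}} := by
      ext T
      simp only [mem_distinctTops, Finset.mem_insert, Finset.mem_singleton]
      constructor
      · rintro ⟨j, hj, rfl⟩
        rcases Finset.mem_insert.mp hj with h | h
        · left; simp [hPdef, h, prefWithTop_top]
        · right
          have hj1 : j = 1 := Finset.mem_singleton.mp h
          simp [hPdef, hj1, prefWithTop_top]
      · rintro (rfl | rfl)
        · exact ⟨0, by simp [hNdef], by simp [hPdef, prefWithTop_top]⟩
        · exact ⟨1, by simp [hNdef], by simp [hPdef, prefWithTop_top]⟩
    have htops' : distinctTops (fun i hi => (P i hi).relabel μ.finsetCongr)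
        = {({a} : Finset O), {b}} := by
      ext T
      simp only [mem_distinctTops, Finset.mem_insert, Finset.mem_singleton]
      have hca : μ.finsetCongr {a} = ({b} : Finset O) := by
        simp [hμ, Equiv.finsetCongr_apply, Finset.map_singleton]
      have hcb : μ.finsetCongr {b} = ({a} : Finset O) := by
        simp [hμ, Equiv.finsetCongr_apply, Finset.map_singleton]
      constructor
      · rintro ⟨j, hj, rfl⟩
        rcases Finset.mem_insert.mp hj with h | h
        · right; simp [hPdef, h, Pref.top_relabel, prefWithTop_top, hca]
        · left
          have hj1 : j = 1 := Finset.mem_singleton.mp h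
          simp [hPdef, hj1, Pref.top_relabel, prefWithTop_top, hcb]
      · rintro (rfl | rfl)
        · exact ⟨1, by simp [hNdef],
            by simp [hPdef, Pref.top_relabel, prefWithTop_top, hcb]⟩
        · exact ⟨0, by simp [hNdef],
            by simp [hPdef, Pref.top_relabel, prefWithTop_top, hca]⟩
    have hsame : fBest r N (fun i hi => (P i hi).relabel μ.finsetCongr) = fBest r N P :=
      fBest_congr r hN hN _ _ (htops'.trans htops.symm)
    have hneu := hne μ N hN P (fun _ _ => trivial)
    rw [hsame] at hneu
    have hW := fBest_mem r hN P
    rw [htops] at hW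
    rcases Finset.mem_insert.mp hW with h | h
    · rw [h] at hneu
      rw [Finset.image_singleton] at hneu
      simp only [hμ, Equiv.swap_apply_left] at hneu
      exact hab (Finset.singleton_injective hneu.symm)
    · rw [Finset.mem_singleton.mp h] at hneu
      rw [Finset.image_singleton] at hneu
      simp only [hμ, Equiv.swap_apply_right] at hneu
      exact hab (Finset.singleton_injective hneu)
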